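/- Let X be a subshift over a finite alphabet Λ. Then Ω_X is invariant under the partial Bernoulli action of 𝔽: for every g ∈ 𝔽 and every ξ ∈ Ω_X with g⁻¹ ∈ ξ, the left translate gξ = {gh : h ∈ ξ} again lies in Ω_X (and contains g). -/

import Mathlib

open scoped Classical

namespace SubshiftPaper

variable {Λ : Type}

/-- The left shift on infinite words. -/
def shiftMap (x : ℕ → Λ) : ℕ → Λ := fun n => x (n + 1)

/-- Concatenation of a finite word with an infinite word. -/
def cat (α : List Λ) (y : ℕ → Λ) : ℕ → Λ := fun n => α.getD n (y (n - α.length))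

/-- `α` is a prefix of the infinite word `x`. -/
def Pref (α : List Λ) (x : ℕ → Λ) : Prop := ∀ (i : ℕ) (h : i < α.length), x i = α[i]

/-- The tail of `x` after `n` letters. -/
def tail (x : ℕ → Λ) (n : ℕ) : ℕ → Λ := fun i => x (n + i)

/-- `α` occurs in `x` at position `n`. -/
def OccursAt (α : List Λ) (x : ℕ → Λ) (n : ℕ) : Prop :=
  ∀ (i : ℕ) (h : i < α.length), x (n + i) = α[i]

/-- `α` occurs in `x` (as a contiguous block of letters). -/
def Occurs (α : List Λ) (x : ℕ → Λ) : Prop := ∃ n, OccursAt α x n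

/-- `X` is a subshift: a nonempty closed shift-invariant subset. -/
def IsSubshift [TopologicalSpace Λ] (X : Set (ℕ → Λ)) : Prop :=
  X.Nonempty ∧ IsClosed X ∧ ∀ x ∈ X, shiftMap x ∈ X

/-- The set of infinite words avoiding all words in `F`. -/
def ForbidSpace (F : Set (List Λ)) : Set (ℕ → Λ) := {x | ∀ α ∈ F, ¬ Occurs α x}

/-- `X` is a subshift of finite type. -/
def IsSFT (X : Set (ℕ → Λ)) : Prop := ∃ F : Set (List Λ), F.Finite ∧ X = ForbidSpace F

/-- The follower set of a finite word. -/
def follower (X : Set (ℕ → Λ)) (α : List Λ) : Set (ℕ → Λ) := {y | y ∈ X ∧ cat α y ∈ X}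

/-- The cylinder of a finite word. -/
def cylinder (X : Set (ℕ → Λ)) (α : List Λ) : Set (ℕ → Λ) := {x | x ∈ X ∧ Pref α x}

/-- The language of `X`. -/
def Language (X : Set (ℕ → Λ)) : Set (List Λ) := {α | ∃ x ∈ X, Occurs α x}

/-- The embedding of finite words into the free group. -/
def wd (α : List Λ) : FreeGroup Λ := (α.map FreeGroup.of).prod

/-- Indicator function of a set of group elements. -/
noncomputable def chi (s : Set (FreeGroup Λ)) : FreeGroup Λ → Bool :=
  fun g => if g ∈ s then true else false

/-- The set `ξ_x ⊆ 𝔽`. -/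
def xiSet [DecidableEq Λ] (X : Set (ℕ → Λ)) (x : ℕ → Λ) : Set (FreeGroup Λ) :=
  {g | ∃ α β : List Λ, g = wd α * (wd β)⁻¹ ∧
        FreeGroup.norm g = α.length + β.length ∧
        Pref α x ∧ tail x α.length ∈ follower X α ∩ follower X β}

/-- `ξ_x` as an element of `2^𝔽`. -/
noncomputable def xiB [DecidableEq Λ] (X : Set (ℕ → Λ)) (x : ℕ → Λ) : FreeGroup Λ → Bool :=
  chi (xiSet X x)

/-- The spectrum `Ω_X`: the closure of `{ξ_x : x ∈ X}` in `2^𝔽`. -/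
noncomputable def Omega [DecidableEq Λ] (X : Set (ℕ → Λ)) : Set (FreeGroup Λ → Bool) :=
  closure ((fun x => xiB X x) '' X)

/-- Left translation of an element of `2^𝔽`. -/
def translate (g : FreeGroup Λ) (ξ : FreeGroup Λ → Bool) : FreeGroup Λ → Bool :=
  fun h => ξ (g⁻¹ * h)

/-- `x` is the stem of `ξ`: `ξ ∩ 𝔽₊` is exactly the set of prefixes of `x`. -/
def IsStem (ξ : FreeGroup Λ → Bool) (x : ℕ → Λ) : Prop :=
  {g | ξ g = true} ∩ {g | ∃ α : List Λ, g = wd α} =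
    {g | ∃ α : List Λ, g = wd α ∧ Pref α x}

/-- `x` is the stem of `ξ` at `g`: `ξ ∩ g𝔽₊ = {gα : α is a prefix of x}`. -/
def IsStemAt (ξ : FreeGroup Λ → Bool) (g : FreeGroup Λ) (x : ℕ → Λ) : Prop :=
  {h | ξ h = true} ∩ {h | ∃ α : List Λ, h = g * wd α} =
    {h | ∃ α : List Λ, h = g * wd α ∧ Pref α x}

/-- The orbit of `ξ` under the spectral partial action. -/
def Orbit (ξ : FreeGroup Λ → Bool) : Set (FreeGroup Λ → Bool) :=
  {η | ∃ g : FreeGroup Λ, ξ g⁻¹ = true ∧ η = translate g ξ}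

/-- Topological freeness of the spectral partial action. -/
noncomputable def TopFree [DecidableEq Λ] (X : Set (ℕ → Λ)) : Prop :=
  ∀ g : FreeGroup Λ, g ≠ 1 →
    ∀ U : Set (FreeGroup Λ → Bool), IsOpen U →
      (U ∩ Omega X ⊆ {ξ | ξ g⁻¹ = true ∧ translate g ξ = ξ}) → U ∩ Omega X = ∅

/-- The periodic infinite word `γ^∞`. -/
noncomputable def perInf [Nonempty Λ] (γ : List Λ) : ℕ → Λ :=
  fun n => γ.getD (n % γ.length) (Classical.arbitrary Λ)

/-- `n`-fold concatenation of a finite word with itself. -/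
def rep : ℕ → List Λ → List Λ
  | 0, _ => []
  | n + 1, γ => γ ++ rep n γ

/-- `γ` is a circuit relative to `X`. -/
noncomputable def IsCircuit [Nonempty Λ] (X : Set (ℕ → Λ)) (γ : List Λ) : Prop :=
  γ ≠ [] ∧ perInf γ ∈ X

/-- `y` is an exit for the circuit `γ`. -/
noncomputable def IsExit [Nonempty Λ] (X : Set (ℕ → Λ)) (γ : List Λ) (y : ℕ → Λ) : Prop :=
  y ≠ perInf γ ∧ cat γ y ∈ X

/-- `z` is a strong exit for the circuit `γ`. -/
noncomputable def IsStrongExit [Nonempty Λ] (X : Set (ℕ → Λ)) (γ : List Λ) (z : ℕ → Λ) : Prop :=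
  z ≠ perInf γ ∧ ∀ n : ℕ, cat (rep n γ) z ∈ X

/-- The sets `X_g` of the standard partial action. -/
def Xg [DecidableEq Λ] (X : Set (ℕ → Λ)) (g : FreeGroup Λ) : Set (ℕ → Λ) :=
  {x | ∃ α β : List Λ, g = wd α * (wd β)⁻¹ ∧
        FreeGroup.norm g = α.length + β.length ∧
        ∃ y ∈ follower X α ∩ follower X β, x = cat α y}

/-- `x` is a fixed point for `θ_g`. -/
def IsThetaFixed [DecidableEq Λ] (X : Set (ℕ → Λ)) (g : FreeGroup Λ) (x : ℕ → Λ) : Prop :=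
  ∃ α β : List Λ, g = wd α * (wd β)⁻¹ ∧
    FreeGroup.norm g = α.length + β.length ∧
    ∃ y ∈ follower X α ∩ follower X β, x = cat β y ∧ cat α y = x

/-- `x` may be collectively reached from the finite set `B`. -/
def CollReached (X : Set (ℕ → Λ)) (B : Finset (List Λ)) (x : ℕ → Λ) : Prop :=
  ∃ α γ : List Λ, Pref α x ∧ ∀ β ∈ B, cat (β ++ γ) (tail x α.length) ∈ X

/-- `X` is collectively cofinal. -/
def CollCofinal (X : Set (ℕ → Λ)) : Prop :=
  ∀ B : Finset (List Λ), ↑B ⊆ Language X → (⋂ β ∈ B, follower X β).Nonempty →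
    ∀ x ∈ X, CollReached X B x

/-- `X` is strongly cofinal. -/
def StrongCofinal (X : Set (ℕ → Λ)) : Prop :=
  ∀ β ∈ Language X, ∃ M : ℕ, ∀ x ∈ X, ∃ α γ : List Λ, Pref α x ∧
    cat (β ++ γ) (tail x α.length) ∈ X ∧ α.length + γ.length ≤ M

/-- The even shift. -/
def evenShift : Set (ℕ → Fin 2) :=
  ForbidSpace {w | ∃ n : ℕ, w = 0 :: (List.replicate (2 * n + 1) 1 ++ [0])}


/-! Auxiliary lemmas -/

lemma cat_lt {α : List Λ} {y : ℕ → Λ} {n : ℕ} (h : n < α.length) : cat α y n = α[n] := by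
  show α.getD n (y (n - α.length)) = α[n]
  exact List.getD_eq_getElem _ _ h

lemma cat_ge {α : List Λ} {y : ℕ → Λ} {n : ℕ} (h : α.length ≤ n) :
    cat α y n = y (n - α.length) := by
  show α.getD n (y (n - α.length)) = y (n - α.length)
  exact List.getD_eq_default _ _ h

lemma cat_nil (y : ℕ → Λ) : cat ([] : List Λ) y = y := by
  funext n; simp [cat]

lemma cat_append (α β : List Λ) (y : ℕ → Λ) : cat (α ++ β) y = cat α (cat β y) := by
  funext n
  rcases lt_or_ge n α.length with h | h
  · rw [cat_lt (by simp; omega), cat_lt h, List.getElem_append_left h]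
  · rcases lt_or_ge n (α.length + β.length) with h2 | h2
    · rw [cat_lt (by simp; omega), cat_ge h, cat_lt (by omega),
        List.getElem_append_right h]
    · rw [cat_ge (by simp; omega), cat_ge h, cat_ge (by omega)]
      congr 1; simp; omega

lemma tail_cat (α : List Λ) (y : ℕ → Λ) : tail (cat α y) α.length = y := by
  funext i
  rw [tail, cat_ge (by omega)]
  congr 1; omega

lemma pref_cat (α : List Λ) (y : ℕ → Λ) : Pref α (cat α y) := fun i h => cat_lt h

lemma cat_pref {α : List Λ} {x : ℕ → Λ} (h : Pref α x) : cat α (tail x α.length) = x := by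
  funext n
  rcases lt_or_ge n α.length with h1 | h1
  · rw [cat_lt h1, ← h n h1]
  · rw [cat_ge h1, tail]; congr 1; omega

lemma tail_zero (x : ℕ → Λ) : tail x 0 = x := by funext i; simp [tail]

lemma tail_mem [TopologicalSpace Λ] {X : Set (ℕ → Λ)} (hX : IsSubshift X) {x : ℕ → Λ}
    (hx : x ∈ X) (n : ℕ) : tail x n ∈ X := by
  induction n with
  | zero => rwa [tail_zero]
  | succ n ih =>
    have : tail x (n + 1) = shiftMap (tail x n) := by
      funext i; simp [tail, shiftMap]; congr 1; omega
    rw [this]; exact hX.2.2 _ ih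

lemma wd_nil : wd ([] : List Λ) = 1 := rfl

lemma wd_append (α β : List Λ) : wd (α ++ β) = wd α * wd β := by
  simp [wd]

lemma wd_mk (α : List Λ) : wd α = FreeGroup.mk (α.map fun a => (a, true)) := by
  induction α with
  | nil => simpa [wd] using FreeGroup.one_eq_mk
  | cons a l ih =>
    have : wd (a :: l) = FreeGroup.of a * wd l := by simp [wd]
    rw [this, ih, FreeGroup.of, FreeGroup.mul_mk]
    rfl

lemma chain'_total {P : Type*} {R : P → P → Prop} (h : ∀ a b, R a b) :
    ∀ l : List P, l.Chain' R
  | [] => List.isChain_nil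
  | [a] => List.isChain_singleton a
  | a :: b :: l => List.IsChain.cons_cons (h a b) (chain'_total h (b :: l))

lemma reduce_chain' [DecidableEq Λ] {L : List (Λ × Bool)}
    (h : L.Chain' fun a b => ¬(a.1 = b.1 ∧ a.2 = !b.2)) : FreeGroup.reduce L = L := by
  induction L with
  | nil => rfl
  | cons x L ih =>
    rw [FreeGroup.reduce.cons, ih h.tail]
    cases L with
    | nil => rfl
    | cons hd tl => simp [(List.isChain_cons_cons.mp h).1]

lemma norm_wd [DecidableEq Λ] (α β : List Λ)
    (hc : ∀ c : Λ, α.getLast? = some c → β.getLast? ≠ some c) :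
    FreeGroup.norm (wd α * (wd β)⁻¹) = α.length + β.length := by
  rw [wd_mk, wd_mk, FreeGroup.inv_mk, FreeGroup.mul_mk]
  have hrep : FreeGroup.invRev (β.map fun a => (a, true)) =
      β.reverse.map fun a => (a, false) := by
    simp [FreeGroup.invRev, List.map_reverse, List.map_map, Function.comp]
  rw [hrep]
  have hred : FreeGroup.reduce ((α.map fun a => (a, true)) ++
      (β.reverse.map fun a => (a, false))) =
      (α.map fun a => (a, true)) ++ (β.reverse.map fun a => (a, false)) := by
    apply reduce_chain'
    refine List.isChain_append.mpr ?_
    refine ⟨?_, ?_, ?_⟩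
    · exact (List.isChain_map _).2 (chain'_total (by simp) _)
    · exact (List.isChain_map _).2 (chain'_total (by simp) _)
    · intro x hx y hy
      rw [List.getLast?_map] at hx
      rw [List.head?_map, List.head?_reverse] at hy
      obtain ⟨c, hc1, rfl⟩ := Option.map_eq_some_iff.mp hx
      obtain ⟨c', hc2, rfl⟩ := Option.map_eq_some_iff.mp hy
      simp only [Bool.not_false, ne_eq]
      rintro ⟨rfl, -⟩
      exact hc c hc1 hc2
  rw [FreeGroup.norm, FreeGroup.toWord_mk, hred]
  simp

lemma exists_common_suffix [DecidableEq Λ] (α β : List Λ) :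
    ∃ a b d : List Λ, α = a ++ d ∧ β = b ++ d ∧
      ∀ c : Λ, a.getLast? = some c → b.getLast? ≠ some c := by
  suffices H : ∀ (n : ℕ) (α β : List Λ), α.length ≤ n →
      ∃ a b d : List Λ, α = a ++ d ∧ β = b ++ d ∧
        ∀ c : Λ, a.getLast? = some c → b.getLast? ≠ some c from H α.length α β le_rfl
  intro n
  induction n with
  | zero =>
    intro α β h
    have : α = [] := List.length_eq_zero_iff.mp (Nat.le_zero.mp h)
    subst this
    exact ⟨[], β, [], by simp, by simp, by simp⟩
  | succ n ih =>
    intro α β h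
    by_cases hα : α = []
    · subst hα; exact ⟨[], β, [], by simp, by simp, by simp⟩
    by_cases heq : α.getLast? = β.getLast?
    · obtain ⟨a', c, rfl⟩ := (List.eq_nil_or_concat α).resolve_left hα
      have hβc : β.getLast? = some c := by
        rw [← heq]; simp [List.concat_eq_append]
      have hβne : β ≠ [] := by rintro rfl; simp at hβc
      obtain ⟨b', rfl⟩ : ∃ b', β = b' ++ [c] := by
        refine ⟨β.dropLast, ?_⟩
        have := List.getLast?_eq_getLast hβne
        rw [this] at hβc
        rw [← Option.some_inj.mp hβc]
        exact (List.dropLast_append_getLast hβne).symm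
      obtain ⟨a, b, d, h1, h2, h3⟩ := ih a' b' (by simp at h; omega)
      exact ⟨a, b, d ++ [c], by rw [h1]; simp [List.concat_eq_append],
        by rw [h2]; simp, h3⟩
    · exact ⟨α, β, [], by simp, by simp, fun c h1 h2 => heq (h1.trans h2.symm)⟩

lemma mem_xiSet [TopologicalSpace Λ] [DecidableEq Λ] {X : Set (ℕ → Λ)} (hX : IsSubshift X)
    {α β : List Λ} {y : ℕ → Λ} (hy : y ∈ X) (ha : cat α y ∈ X) (hb : cat β y ∈ X) :
    wd α * (wd β)⁻¹ ∈ xiSet X (cat α y) := by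
  obtain ⟨a, b, d, hα, hβ, hcond⟩ := exists_common_suffix α β
  have heq : wd α * (wd β)⁻¹ = wd a * (wd b)⁻¹ := by
    rw [hα, hβ, wd_append, wd_append]; group
  have htl : tail (cat α y) a.length = cat d y := by
    rw [hα, cat_append]; exact tail_cat a _
  have hdX : cat d y ∈ X := by
    have := tail_mem hX ha a.length
    rwa [htl] at this
  refine ⟨a, b, heq, by rw [heq]; exact norm_wd a b hcond, ?_, ?_, ?_⟩
  · rw [hα, cat_append]; exact pref_cat a _
  · exact ⟨htl ▸ hdX, by rw [htl, ← cat_append, ← hα]; exact ha⟩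
  · exact ⟨htl ▸ hdX, by rw [htl, ← cat_append, ← hβ]; exact hb⟩

lemma pref_of_cat_le {β σ : List Λ} {y : ℕ → Λ} (h : Pref σ (cat β y))
    (hl : σ.length ≤ β.length) : β = σ ++ β.drop σ.length := by
  have ht : β.take σ.length = σ := by
    apply List.ext_getElem (by simp; omega)
    intro i h1 h2
    rw [List.getElem_take]
    exact ((h i h2).symm.trans (cat_lt (by omega))).symm
  conv_lhs => rw [← List.take_append_drop σ.length β, ht]

lemma pref_of_cat_ge {β σ : List Λ} {y : ℕ → Λ} (h : Pref σ (cat β y))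
    (hl : β.length ≤ σ.length) :
    σ = β ++ σ.drop β.length ∧ Pref (σ.drop β.length) y := by
  constructor
  · have ht : σ.take β.length = β := by
      apply List.ext_getElem (by simp; omega)
      intro i h1 h2
      rw [List.getElem_take]
      exact (h i (by omega)).symm.trans (cat_lt h2)
    conv_lhs => rw [← List.take_append_drop β.length σ, ht]
  · intro i hi
    simp only [List.length_drop] at hi
    have h1 := h (β.length + i) (by omega)
    rw [cat_ge (by omega)] at h1
    have h2 : β.length + i - β.length = i := by omega
    rw [h2] at h1
    rw [List.getElem_drop]
    exact h1

lemma key [TopologicalSpace Λ] [DecidableEq Λ] {X : Set (ℕ → Λ)} (hX : IsSubshift X)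
    {α β : List Λ} {y : ℕ → Λ} (hy : y ∈ X) (ha : cat α y ∈ X) (hb : cat β y ∈ X)
    {h : FreeGroup Λ} (hh : h ∈ xiSet X (cat β y)) :
    wd α * (wd β)⁻¹ * h ∈ xiSet X (cat α y) := by
  obtain ⟨σ, τ, rfl, -, hpref, htail⟩ := hh
  rcases le_or_gt σ.length β.length with hl | hl
  · -- σ is a prefix of β
    have hβ := pref_of_cat_le hpref hl
    set ρ := β.drop σ.length with hρ
    have ht : tail (cat β y) σ.length = cat ρ y := by
      conv_lhs => rw [hβ, cat_append]
      exact tail_cat σ _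
    have halg : wd α * (wd β)⁻¹ * (wd σ * (wd τ)⁻¹) = wd α * (wd (τ ++ ρ))⁻¹ := by
      conv_lhs => rw [hβ]
      rw [wd_append, wd_append]; group
    rw [halg]
    apply mem_xiSet hX hy ha
    rw [cat_append]
    have := htail.2.2
    rwa [ht] at this
  · -- β is a prefix of σ
    obtain ⟨hσeq, hρp⟩ := pref_of_cat_ge hpref hl.le
    set ρ := σ.drop β.length with hρ
    set y' := tail y ρ.length with hy'
    have ht : tail (cat β y) σ.length = y' := by
      funext i
      rw [tail, cat_ge (by omega), hy', tail]
      congr 1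
      have : ρ.length = σ.length - β.length := by rw [hρ, List.length_drop]
      omega
    have hcatρ : cat ρ y' = y := cat_pref hρp
    have halg : wd α * (wd β)⁻¹ * (wd σ * (wd τ)⁻¹) = wd (α ++ ρ) * (wd τ)⁻¹ := by
      conv_lhs => rw [hσeq]
      rw [wd_append, wd_append]; group
    rw [halg]
    have hy'X : y' ∈ X := by rw [← ht]; exact htail.1.1
    have hτ : cat τ y' ∈ X := by rw [← ht]; exact htail.2.2
    have haρ : cat (α ++ ρ) y' ∈ X := by rw [cat_append, hcatρ]; exact ha
    have := mem_xiSet hX hy'X haρ hτ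
    rwa [cat_append, hcatρ] at this


lemma chi_eq_true {s : Set (FreeGroup Λ)} {g : FreeGroup Λ} : chi s g = true ↔ g ∈ s := by
  simp only [chi]
  split_ifs with h
  · simp [h]
  · simp [h]

lemma xiB_eq_true [DecidableEq Λ] {X : Set (ℕ → Λ)} {x : ℕ → Λ} {g : FreeGroup Λ} :
    xiB X x g = true ↔ g ∈ xiSet X x := chi_eq_true

lemma one_mem_xiSet [TopologicalSpace Λ] [DecidableEq Λ] {X : Set (ℕ → Λ)} {x : ℕ → Λ}
    (hx : x ∈ X) : (1 : FreeGroup Λ) ∈ xiSet X x := by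
  refine ⟨[], [], by simp [wd_nil], by simp [wd_nil], ?_, ?_⟩
  · intro i hi; simp at hi
  · simp only [List.length_nil, tail_zero]
    exact ⟨⟨hx, by rw [cat_nil]; exact hx⟩, ⟨hx, by rw [cat_nil]; exact hx⟩⟩

lemma translate_xiB [TopologicalSpace Λ] [DecidableEq Λ] {X : Set (ℕ → Λ)} (hX : IsSubshift X)
    {x : ℕ → Λ} (hx : x ∈ X) {g : FreeGroup Λ} (hg : g⁻¹ ∈ xiSet X x) :
    ∃ x' ∈ X, translate g (xiB X x) = xiB X x' := by
  obtain ⟨α, β, hgeq, -, hpref, htail⟩ := hg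
  set y := tail x α.length with hy
  have hxeq : x = cat α y := (cat_pref hpref).symm
  have hyX : y ∈ X := htail.1.1
  have haX : cat α y ∈ X := htail.1.2
  have hbX : cat β y ∈ X := htail.2.2
  refine ⟨cat β y, hbX, ?_⟩
  funext k
  have hbool : ∀ b c : Bool, (b = true ↔ c = true) → b = c := by decide
  refine hbool _ _ ?_
  show xiB X x (g⁻¹ * k) = true ↔ xiB X (cat β y) k = true
  rw [xiB_eq_true, xiB_eq_true]
  constructor
  · intro hk
    rw [hxeq] at hk
    have hmem := key hX hyX hbX haX hk
    have he : wd β * (wd α)⁻¹ * (g⁻¹ * k) = k := by rw [hgeq]; group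
    rwa [he] at hmem
  · intro hk
    have hmem := key hX hyX haX hbX hk
    rwa [← hgeq, ← hxeq] at hmem

/-- `Ω_X` is invariant under the partial Bernoulli action. -/
theorem omega_invariant {Λ : Type} [Fintype Λ] [Nonempty Λ] [DecidableEq Λ]
    [TopologicalSpace Λ] [DiscreteTopology Λ]
    (X : Set (ℕ → Λ)) (hX : IsSubshift X)
    (g : FreeGroup Λ) (ξ : FreeGroup Λ → Bool) (hξ : ξ ∈ Omega X)
    (h : ξ g⁻¹ = true) :
    translate g ξ ∈ Omega X ∧ translate g ξ g = true := by
  set S := (fun x => xiB X x) '' X with hS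
  have hξ' : ξ ∈ closure S := hξ
  have hξ1 : ξ 1 = true := by
    have hsub : S ⊆ {η : FreeGroup Λ → Bool | η 1 = true} := by
      rintro η ⟨x, hx, rfl⟩
      exact xiB_eq_true.mpr (one_mem_xiSet hx)
    have hclosed : IsClosed {η : FreeGroup Λ → Bool | η 1 = true} := by
      have he : {η : FreeGroup Λ → Bool | η 1 = true} =
          (fun η : FreeGroup Λ → Bool => η 1) ⁻¹' {true} := rfl
      rw [he]
      exact IsClosed.preimage (continuous_apply 1) (isClosed_discrete ({true} : Set Bool))
    exact closure_minimal hsub hclosed hξ'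
  constructor
  · have hUopen : IsOpen {η : FreeGroup Λ → Bool | η g⁻¹ = true} := by
      have he : {η : FreeGroup Λ → Bool | η g⁻¹ = true} =
          (fun η : FreeGroup Λ → Bool => η g⁻¹) ⁻¹' {true} := rfl
      rw [he]
      exact IsOpen.preimage (continuous_apply g⁻¹) (isOpen_discrete ({true} : Set Bool))
    have hmem2 : ξ ∈ closure (S ∩ {η | η g⁻¹ = true}) := by
      rw [mem_closure_iff]
      intro o ho hxo
      obtain ⟨z, hz⟩ := mem_closure_iff.mp hξ' (o ∩ {η | η g⁻¹ = true})
        (ho.inter hUopen) ⟨hxo, h⟩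
      exact ⟨z, hz.1.1, hz.2, hz.1.2⟩
    have hcont : Continuous (translate g : (FreeGroup Λ → Bool) → (FreeGroup Λ → Bool)) :=
      continuous_pi fun k => continuous_apply (g⁻¹ * k)
    have himg : translate g ξ ∈ closure (translate g '' (S ∩ {η | η g⁻¹ = true})) :=
      image_closure_subset_closure_image hcont ⟨ξ, hmem2, rfl⟩
    have hsub : translate g '' (S ∩ {η | η g⁻¹ = true}) ⊆ S := by
      rintro η ⟨ζ, ⟨⟨x, hx, rfl⟩, hζU⟩, rfl⟩
      obtain ⟨x', hx', heq⟩ := translate_xiB hX hx (xiB_eq_true.mp hζU)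
      exact heq ▸ ⟨x', hx', rfl⟩
    exact closure_mono hsub himg
  · show ξ (g⁻¹ * g) = true
    rw [inv_mul_cancel]
    exact hξ1

end SubshiftPaper
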